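/- Let X be a metric space exhausted by an increasing sequence of compact sets K₀ ⊆ K₁ ⊆ ⋯ with K_{i-1} contained in the interior of K_i, and let f : X → ℂⁿ be a map inducing a pseudometric dist_f on X. Suppose there are positive reals εᵢ with dist_f(K_{i-1}, X \ K_i) > 1/(2ε_{i-1}) for every i ≥ 1, where dist_f(A, B) = inf{dist_f(x,y) : x ∈ A, y ∈ B}, and suppose Σᵢ 1/εᵢ = ∞ with εᵢ decreasing satisfying ε_{i+1} < εᵢ/2. Then every divergent path in X (a path eventually leaving every compact K_i) has infinite length with respect to dist_f; i.e., the pseudometric dist_f is complete in the sense that dist_f(x₀, ·) → ∞ along any divergent sequence. -/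
import Mathlib


/-- Completeness of the induced pseudometric: if `dist_f (K_{i-1}, X \ K_i) > 1/(2 ε_{i-1})`
for an exhaustion by compacts with `ε_i` decreasing, `ε_{i+1} < ε_i/2`, and `Σ 1/ε_i = ∞`,
then `dist_f (x₀, ·) → ∞` along any divergent sequence (one eventually leaving every `K_i`). -/
theorem stmt_5 {X : Type*} [MetricSpace X] (n : ℕ)
    (d : X → X → ℝ)
    (hd_nonneg : ∀ x y, 0 ≤ d x y) (hd_self : ∀ x, d x x = 0)
    (hd_symm : ∀ x y, d x y = d y x)
    (hd_tri : ∀ x y z, d x z ≤ d x y + d y z)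
    (K : ℕ → Set X) (ε : ℕ → ℝ)
    (hKcpt : ∀ i, IsCompact (K i))
    (hKmono : ∀ i, K i ⊆ interior (K (i + 1)))
    (hexh : (⋃ i, K i) = Set.univ)
    (hεpos : ∀ i, 0 < ε i) (hεhalf : ∀ i, ε (i + 1) < ε i / 2)
    (hdiv : ¬ Summable (fun i => 1 / ε i) ∨ Filter.Tendsto
      (fun N => ∑ i ∈ Finset.range N, 1 / ε i) Filter.atTop Filter.atTop)
    (hshell : ∀ i, ∀ x ∈ K i, ∀ y ∉ K (i + 1), d x y > 1 / (2 * ε i)) :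
    ∀ x₀ ∈ K 0, ∀ u : ℕ → X,
      (∀ i, ∀ᶠ m in Filter.atTop, u m ∉ K i) →
      Filter.Tendsto (fun m => d x₀ (u m)) Filter.atTop Filter.atTop := by
  intro x₀ hx₀ u hu
  -- K 0 ⊆ K i for all i
  have hK0 : ∀ i, x₀ ∈ K i := by
    intro i
    induction i with
    | zero => exact hx₀
    | succ i ih => exact interior_subset (hKmono i ih)
  -- ε i ≤ ε 0 / 2 ^ i
  have hεb : ∀ i, ε i ≤ ε 0 / 2 ^ i := by
    intro i
    induction i with
    | zero => simp
    | succ i ih =>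
      have := hεhalf i
      have : ε (i + 1) ≤ (ε 0 / 2 ^ i) / 2 := by linarith
      calc ε (i + 1) ≤ (ε 0 / 2 ^ i) / 2 := this
        _ = ε 0 / 2 ^ (i + 1) := by ring
  rw [Filter.tendsto_atTop]
  intro M
  -- choose i with 2 ^ i / (2 * ε 0) ≥ M
  obtain ⟨i, hi⟩ := pow_unbounded_of_one_lt (M * (2 * ε 0)) (one_lt_two (α := ℝ))
  filter_upwards [hu (i + 1)] with m hm
  have h1 : d x₀ (u m) > 1 / (2 * ε i) := hshell i x₀ (hK0 i) (u m) hm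
  have hε0 : 0 < ε 0 := hεpos 0
  have h2pow : (0 : ℝ) < 2 ^ i := by positivity
  have h2 : M ≤ 1 / (2 * ε i) := by
    have hεi : 0 < ε i := hεpos i
    have key : 2 ^ i * ε i ≤ ε 0 := by
      have := hεb i
      rw [le_div_iff₀ h2pow] at this
      linarith
    rw [le_div_iff₀ (by positivity)]
    nlinarith [mul_pos hεi hε0, mul_le_mul_of_nonneg_left key (le_of_lt hεi)]
  linarith
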